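/- Let G = C_n^m (the m-th power of the n-cycle) or G = P_n^m (the m-th power of the n-path), let i be a vertex and m+1 ≤ t ≤ n. If S is a legal dominating sequence of G whose self-footprinting set I_S satisfies I_S ∩ [i, i+t] = {i, i+t} (indices modulo n in the cycle case), then |Ŝ ∩ [i, i+t)| ≤ t − m. -/

import Mathlib

namespace GrundyDom

/-- Closed neighborhood N[v]. -/
def cn {V : Type*} (G : SimpleGraph V) (v : V) : Set V := insert v (G.neighborSet v)

/-- Union of closed neighborhoods of the vertices of a list. -/
def cnUnion {V : Type*} (G : SimpleGraph V) (L : List V) : Set V := ⋃ v ∈ L, cn G v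

/-- Private neighborhood of `v` with respect to the first `i` entries of `S`:
`N[v] \ (N[v_1] ∪ ... ∪ N[v_i])`. -/
def PN {V : Type*} (G : SimpleGraph V) (S : List V) (i : ℕ) (v : V) : Set V :=
  cn G v \ cnUnion G (S.take i)

/-- A legal dominating sequence: distinct vertices, dominating set, and every
vertex of the sequence has a nonempty private neighborhood w.r.t. its predecessors. -/
structure IsLegal {V : Type*} (G : SimpleGraph V) (S : List V) : Prop where
  nodup : S.Nodup
  dominates : ∀ v : V, ∃ u ∈ S, v ∈ cn G u
  legal : ∀ i : Fin S.length, (PN G S i.val (S.get i)).Nonempty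

/-- The set `I_S` of vertices that footprint themselves in `S`. -/
def selfFoot {V : Type*} (G : SimpleGraph V) (S : List V) : Set V :=
  {v | ∃ i : Fin S.length, S.get i = v ∧ v ∈ PN G S i.val v}

/-- Grundy domination number: maximum length of a legal dominating sequence. -/
noncomputable def gammaGr {V : Type*} (G : SimpleGraph V) : ℕ :=
  sSup {k | ∃ S : List V, IsLegal G S ∧ S.length = k}

/-- `γ_gr(G, I)`: maximum length of a legal dominating sequence `S` with `I_S = I`. -/
noncomputable def gammaGrOn {V : Type*} (G : SimpleGraph V) (I : Set V) : ℕ :=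
  sSup {k | ∃ S : List V, IsLegal G S ∧ selfFoot G S = I ∧ S.length = k}

/-- `γ_gr^u(G)`: maximum of `γ_gr(G, I)` over independent sets `I` containing `u`. -/
noncomputable def gammaGrVert {V : Type*} (G : SimpleGraph V) (u : V) : ℕ :=
  sSup {k | ∃ I : Set V, (∀ ⦃a⦄, a ∈ I → ∀ ⦃b⦄, b ∈ I → a ≠ b → ¬ G.Adj a b) ∧
    u ∈ I ∧ k = gammaGrOn G I}

/-- Independent set of a graph. -/
def IsIndep {V : Type*} (G : SimpleGraph V) (I : Set V) : Prop :=
  ∀ ⦃u⦄, u ∈ I → ∀ ⦃v⦄, v ∈ I → u ≠ v → ¬ G.Adj u v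

/-- The X-join product `G ↩ 𝓡`: replace each vertex `v` of `G` by the graph `R v`. -/
def XJoin {V : Type*} (G : SimpleGraph V) {W : V → Type*} (R : ∀ v, SimpleGraph (W v)) :
    SimpleGraph (Σ v, W v) where
  Adj x y := G.Adj x.1 y.1 ∨ ∃ h : x.1 = y.1, (R y.1).Adj (h ▸ x.2) y.2
  symm := by
    constructor
    rintro ⟨a, xa⟩ ⟨b, yb⟩ (h | ⟨h, hadj⟩)
    · exact Or.inl h.symm
    · dsimp at h hadj
      subst h
      exact Or.inr ⟨rfl, (R a).adj_symm hadj⟩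
  loopless := by
    constructor
    rintro ⟨a, xa⟩ (h | ⟨h, hadj⟩)
    · exact G.irrefl h
    · exact (R a).irrefl hadj

/-- The lexicographic product `G ∘ H`. -/
def Lex {V W : Type*} (G : SimpleGraph V) (H : SimpleGraph W) : SimpleGraph (V × W) where
  Adj x y := G.Adj x.1 y.1 ∨ (x.1 = y.1 ∧ H.Adj x.2 y.2)
  symm := by
    constructor
    rintro x y (h | ⟨h1, h2⟩)
    · exact Or.inl h.symm
    · exact Or.inr ⟨h1.symm, h2.symm⟩
  loopless := by
    constructor
    rintro x (h | ⟨_, h⟩)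
    · exact G.irrefl h
    · exact H.irrefl h

/-- The replacement graph `G_{u ↩ H}`: replace the vertex `u` of `G` by `H`. -/
def Replace {V : Type*} (G : SimpleGraph V) (u : V) {W : Type*} (H : SimpleGraph W) :
    SimpleGraph ({v : V // v ≠ u} ⊕ W) where
  Adj x y :=
    match x, y with
    | Sum.inl a, Sum.inl b => G.Adj a.1 b.1
    | Sum.inl a, Sum.inr _ => G.Adj a.1 u
    | Sum.inr _, Sum.inl b => G.Adj u b.1
    | Sum.inr h1, Sum.inr h2 => H.Adj h1 h2
  symm := by constructor; rintro (a|a) (b|b) h <;> exact h.symm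
  loopless := by constructor; rintro (a|a) h <;> exact h.ne rfl

/-- `C_n^m`: the m-th power of the n-cycle, on vertex set `ZMod n`;
two vertices are adjacent iff their circular distance is between 1 and m. -/
def cyclePow (n m : ℕ) : SimpleGraph (ZMod n) where
  Adj i j := i ≠ j ∧ ∃ k : ℕ, 1 ≤ k ∧ k ≤ m ∧ (j = i + k ∨ i = j + k)
  symm := by
    constructor
    rintro i j ⟨hne, k, h1, h2, h3⟩
    exact ⟨hne.symm, k, h1, h2, h3.symm⟩
  loopless := ⟨fun i h => h.1 rfl⟩

/-- `P_n^m`: the m-th power of the n-path, on vertex set `Fin n`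
(vertex `i` represents the `(i+1)`-st vertex of the path);
two vertices adjacent iff their distance is between 1 and m. -/
def pathPow (n m : ℕ) : SimpleGraph (Fin n) where
  Adj i j := i ≠ j ∧ Nat.dist i.val j.val ≤ m
  symm := by
    constructor
    rintro i j ⟨hne, hd⟩
    exact ⟨hne.symm, by rwa [Nat.dist_comm]⟩
  loopless := ⟨fun i h => h.1 rfl⟩

end GrundyDom

namespace GrundyDom

open Finset

lemma cyclePow_adj {n m : ℕ} {a b : ZMod n} :
    (cyclePow n m).Adj a b ↔ a ≠ b ∧ ∃ k : ℕ, 1 ≤ k ∧ k ≤ m ∧ (b = a + k ∨ a = b + k) :=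
  Iff.rfl

lemma pathPow_adj {n m : ℕ} {a b : Fin n} :
    (pathPow n m).Adj a b ↔ a ≠ b ∧ Nat.dist a.val b.val ≤ m :=
  Iff.rfl

lemma card_filter_one (m t : ℕ) (ht : m + 1 ≤ t) :
    ((Finset.range t).filter (fun s => s = 0 ∨ m + 1 ≤ s)).card ≤ t - m := by
  have hsub : (Finset.range t).filter (fun s => s = 0 ∨ m + 1 ≤ s) ⊆
      insert 0 (Finset.Ico (m + 1) t) := by
    intro x hx
    simp only [Finset.mem_filter, Finset.mem_range] at hx
    rcases hx.2 with h | h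
    · simp [h]
    · simp only [Finset.mem_insert, Finset.mem_Ico]
      exact Or.inr ⟨h, hx.1⟩
  calc ((Finset.range t).filter (fun s => s = 0 ∨ m + 1 ≤ s)).card
      ≤ (insert 0 (Finset.Ico (m + 1) t)).card := Finset.card_le_card hsub
    _ ≤ (Finset.Ico (m + 1) t).card + 1 := Finset.card_insert_le _ _
    _ ≤ t - m := by rw [Nat.card_Ico]; omega

lemma card_filter_two (m t : ℕ) :
    ((Finset.range t).filter (fun s => s < t - m)).card ≤ t - m := by
  have hsub : (Finset.range t).filter (fun s => s < t - m) ⊆ Finset.range (t - m) := by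
    intro x hx
    simp only [Finset.mem_filter, Finset.mem_range] at hx ⊢
    exact hx.2
  simpa using Finset.card_le_card hsub

lemma cover_lemma (m t s₀ : ℕ) (Q : Finset ℕ) (h0 : 0 ∈ Q) (ht : t ∈ Q)
    (hsd : ((Finset.range t) \ Q).card < m) :
    ∀ s, s ≤ t → s ≠ s₀ → ∃ q ∈ Q, q ≠ s₀ ∧ Nat.dist q s ≤ m := by
  intro s hst hss
  by_cases hsQ : s ∈ Q
  · exact ⟨s, hsQ, hss, by simp [Nat.dist_self]⟩
  · have h1ne : (Q.filter (· ≤ s)).Nonempty := ⟨0, by simp [h0]⟩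
    have h2ne : (Q.filter (s ≤ ·)).Nonempty := ⟨t, by simp [ht, hst]⟩
    set q₁ := (Q.filter (· ≤ s)).max' h1ne with hq₁
    set q₂ := (Q.filter (s ≤ ·)).min' h2ne with hq₂
    have hq₁Q : q₁ ∈ Q ∧ q₁ ≤ s := by
      have h := Finset.mem_filter.mp ((Q.filter (· ≤ s)).max'_mem h1ne)
      exact ⟨h.1, h.2⟩
    have hq₂Q : q₂ ∈ Q ∧ s ≤ q₂ := by
      have h := Finset.mem_filter.mp ((Q.filter (s ≤ ·)).min'_mem h2ne)
      exact ⟨h.1, h.2⟩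
    have hq₁s : q₁ < s := lt_of_le_of_ne hq₁Q.2 (fun h => hsQ (h ▸ hq₁Q.1))
    have hq₂s : s < q₂ := lt_of_le_of_ne hq₂Q.2 (fun h => hsQ (h ▸ hq₂Q.1))
    have hq₂t : q₂ ≤ t := Finset.min'_le _ t (by simp [ht, hst])
    have hsub : Finset.Ioo q₁ q₂ ⊆ (Finset.range t) \ Q := by
      intro x hx
      rw [Finset.mem_Ioo] at hx
      rw [Finset.mem_sdiff, Finset.mem_range]
      refine ⟨by omega, fun hxQ => ?_⟩
      rcases le_total x s with h | h
      · have : x ≤ q₁ := Finset.le_max' _ x (by simp [hxQ, h])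
        omega
      · have : q₂ ≤ x := Finset.min'_le _ x (by simp [hxQ, h])
        omega
    have hcard : q₂ - q₁ - 1 < m := by
      have h1 := Finset.card_le_card hsub
      rw [Nat.card_Ioo] at h1
      omega
    by_cases h : q₁ = s₀
    · exact ⟨q₂, hq₂Q.1, by omega, by simp [Nat.dist]; omega⟩
    · exact ⟨q₁, hq₁Q.1, h, by simp [Nat.dist]; omega⟩


open Finset

lemma cycle_case (n m t : ℕ) (hm : 1 ≤ m) (ht1 : m + 1 ≤ t) (ht2 : t ≤ n)
    (i : ZMod n) (S : List (ZMod n)) (hleg : IsLegal (cyclePow n m) S)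
    (hI : selfFoot (cyclePow n m) S ∩
          ↑((Finset.range (t + 1)).image (fun s : ℕ => i + (s : ZMod n)))
        = {i, i + (t : ZMod n)}) :
    (S.toFinset ∩ (Finset.range t).image (fun s : ℕ => i + (s : ZMod n))).card ≤ t - m := by
  haveI : NeZero n := ⟨by omega⟩
  set G := cyclePow n m with hG
  -- arithmetic helpers
  have hfne : ∀ a b : ℕ, a < b → b - a < n → i + (a : ZMod n) ≠ i + (b : ZMod n) := by
    intro a b h1 h2 h
    have hab : (a : ZMod n) = (b : ZMod n) := add_left_cancel h
    have hb : ((b : ℕ) : ZMod n) = (a : ZMod n) + ((b - a : ℕ) : ZMod n) := by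
      rw [← Nat.cast_add]
      congr 1
      omega
    rw [hab] at hb
    have h0 : ((b - a : ℕ) : ZMod n) = 0 := (left_eq_add.mp hb)
    have hd := (ZMod.natCast_eq_zero_iff _ n).mp h0
    have := Nat.le_of_dvd (by omega) hd
    omega
  have hcn : ∀ a b : ℕ, Nat.dist a b ≤ m →
      i + (b : ZMod n) ∈ cn G (i + (a : ZMod n)) := by
    intro a b hd
    rcases Nat.lt_trichotomy a b with h | h | h
    · have hk : b - a ≤ m := by simp [Nat.dist] at hd; omega
      have heq : i + (b : ZMod n) = (i + (a : ZMod n)) + ((b - a : ℕ) : ZMod n) := by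
        rw [add_assoc, ← Nat.cast_add]
        congr 2
        omega
      refine Set.mem_insert_iff.mpr (Or.inr ?_)
      rw [SimpleGraph.mem_neighborSet, hG]
      exact cyclePow_adj.mpr ⟨hfne a b h (by omega), b - a, by omega, hk, Or.inl heq⟩
    · subst h; exact Set.mem_insert _ _
    · have hk : a - b ≤ m := by simp [Nat.dist] at hd; omega
      have heq : i + (a : ZMod n) = (i + (b : ZMod n)) + ((a - b : ℕ) : ZMod n) := by
        rw [add_assoc, ← Nat.cast_add]
        congr 2
        omega
      refine Set.mem_insert_iff.mpr (Or.inr ?_)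
      rw [SimpleGraph.mem_neighborSet, hG]
      exact cyclePow_adj.mpr ⟨(hfne b a h (by omega)).symm, a - b, by omega, hk, Or.inr heq⟩
  -- self-footprinters
  obtain ⟨ji, hji, hjiPN⟩ : i ∈ selfFoot G S := by
    have h : i ∈ ({i, i + (t : ZMod n)} : Set (ZMod n)) := Set.mem_insert _ _
    rw [← hI] at h
    exact h.1
  obtain ⟨jt, hjt, hjtPN⟩ : (i + (t : ZMod n)) ∈ selfFoot G S := by
    have h : i + (t : ZMod n) ∈ ({i, i + (t : ZMod n)} : Set (ZMod n)) := by
      exact Set.mem_insert_iff.mpr (Or.inr rfl)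
    rw [← hI] at h
    exact h.1
  have hgetinj : Function.Injective S.get := List.nodup_iff_injective_get.mp hleg.nodup
  have hiS : i ∈ S := List.mem_iff_get.mpr ⟨ji, hji⟩
  have hitS : i + (t : ZMod n) ∈ S := List.mem_iff_get.mpr ⟨jt, hjt⟩
  -- the last-played interval vertex
  set J : Finset (Fin S.length) :=
    Finset.univ.filter (fun j => ∃ s : ℕ, s ≤ t ∧ S.get j = i + (s : ZMod n)) with hJ
  have hJne : J.Nonempty := by
    refine ⟨ji, ?_⟩
    simp only [hJ, Finset.mem_filter, Finset.mem_univ, true_and]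
    exact ⟨0, by omega, by simpa using hji⟩
  set jw := J.max' hJne with hjw
  obtain ⟨s₀, hs₀t, hw⟩ : ∃ s : ℕ, s ≤ t ∧ S.get jw = i + (s : ZMod n) := by
    have h : jw ∈ J := J.max'_mem hJne
    rw [hJ, Finset.mem_filter] at h
    exact h.2
  have hbefore : ∀ u : ZMod n, u ∈ S → (∃ s : ℕ, s ≤ t ∧ u = i + (s : ZMod n)) →
      u ≠ S.get jw → u ∈ S.take jw.val := by
    intro u h1 h2 h4
    obtain ⟨j, hj⟩ := List.mem_iff_get.mp h1
    have hjJ : j ∈ J := by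
      simp only [hJ, Finset.mem_filter, Finset.mem_univ, true_and]
      obtain ⟨s, hs1, hs2⟩ := h2
      exact ⟨s, hs1, hj.trans hs2⟩
    have hjlt : (j : ℕ) < jw.val := by
      have h5 : j ≤ jw := J.le_max' j hjJ
      have h6 : j ≠ jw := fun h => h4 (by rw [← hj, h])
      exact lt_of_le_of_ne h5 (fun h => h6 (Fin.ext h))
    rw [← hj, List.get_eq_getElem]
    rw [List.getElem_take' j.isLt hjlt]
    exact List.getElem_mem _
  by_cases hc0 : s₀ = 0
  · -- w = i
    subst hc0
    rw [Nat.cast_zero, add_zero] at hw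
    have hjweq : jw = ji := hgetinj (hw.trans hji.symm)
    have hgap : ∀ s : ℕ, 1 ≤ s → s ≤ m → (i + (s : ZMod n)) ∉ S := by
      intro s h1 h2 hmem
      have hne : i + (s : ZMod n) ≠ S.get jw := by
        rw [hw]
        exact fun h => hfne 0 s (by omega) (by omega) (by simpa using h.symm)
      have htake := hbefore _ hmem ⟨s, by omega, rfl⟩ hne
      have hcni : i ∈ cn G (i + (s : ZMod n)) := by
        have h3 := hcn s 0 (by simp [Nat.dist]; omega)
        simpa using h3
      refine hjiPN.2 ?_
      rw [← hjweq]
      simp only [cnUnion, Set.mem_iUnion]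
      exact ⟨_, htake, hcni⟩
    have hsub : S.toFinset ∩ (Finset.range t).image (fun s : ℕ => i + (s : ZMod n)) ⊆
        ((Finset.range t).filter (fun s => s = 0 ∨ m + 1 ≤ s)).image
          (fun s : ℕ => i + (s : ZMod n)) := by
      intro x hx
      rw [Finset.mem_inter] at hx
      obtain ⟨s, hs, hsx⟩ := Finset.mem_image.mp hx.2
      rw [Finset.mem_range] at hs
      refine Finset.mem_image.mpr ⟨s, Finset.mem_filter.mpr ⟨Finset.mem_range.mpr hs, ?_⟩, hsx⟩
      by_contra hcc
      push_neg at hcc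
      exact hgap s (by omega) (by omega) (by rw [hsx]; exact List.mem_toFinset.mp hx.1)
    exact le_trans (Finset.card_le_card hsub)
      (le_trans Finset.card_image_le (card_filter_one m t ht1))
  by_cases hct : s₀ = t
  · rw [hct] at hw
    have hjweq : jw = jt := hgetinj (hw.trans hjt.symm)
    have hgap : ∀ s : ℕ, t - m ≤ s → s < t → (i + (s : ZMod n)) ∉ S := by
      intro s h1 h2 hmem
      have hne : i + (s : ZMod n) ≠ S.get jw := by
        rw [hw]
        exact hfne s t h2 (by omega)
      have htake := hbefore _ hmem ⟨s, by omega, rfl⟩ hne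
      have hcni : i + (t : ZMod n) ∈ cn G (i + (s : ZMod n)) :=
        hcn s t (by simp [Nat.dist]; omega)
      refine hjtPN.2 ?_
      rw [← hjweq]
      simp only [cnUnion, Set.mem_iUnion]
      exact ⟨_, htake, hcni⟩
    have hsub : S.toFinset ∩ (Finset.range t).image (fun s : ℕ => i + (s : ZMod n)) ⊆
        ((Finset.range t).filter (fun s => s < t - m)).image
          (fun s : ℕ => i + (s : ZMod n)) := by
      intro x hx
      rw [Finset.mem_inter] at hx
      obtain ⟨s, hs, hsx⟩ := Finset.mem_image.mp hx.2
      rw [Finset.mem_range] at hs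
      refine Finset.mem_image.mpr ⟨s, Finset.mem_filter.mpr ⟨Finset.mem_range.mpr hs, ?_⟩, hsx⟩
      by_contra hcc
      push_neg at hcc
      exact hgap s (by omega) hs (by rw [hsx]; exact List.mem_toFinset.mp hx.1)
    exact le_trans (Finset.card_le_card hsub)
      (le_trans Finset.card_image_le (card_filter_two m t))
  -- middle case
  by_contra hcon
  push_neg at hcon
  set P₀ := (Finset.range t).filter (fun s : ℕ => i + (s : ZMod n) ∈ S) with hP₀
  have hinjf : ∀ a b : ℕ, a < t → b < t → i + (a : ZMod n) = i + (b : ZMod n) → a = b := by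
    intro a b ha hb h
    rcases Nat.lt_trichotomy a b with hlt | he | hgt
    · exact absurd h (hfne a b hlt (by omega))
    · exact he
    · exact absurd h.symm (hfne b a hgt (by omega))
  have hcardP : S.toFinset ∩ (Finset.range t).image (fun s : ℕ => i + (s : ZMod n))
      = P₀.image (fun s : ℕ => i + (s : ZMod n)) := by
    ext x
    simp only [Finset.mem_inter, Finset.mem_image, hP₀, Finset.mem_filter,
      Finset.mem_range, List.mem_toFinset]
    constructor
    · rintro ⟨hxS, s, hs, rfl⟩
      exact ⟨s, ⟨hs, hxS⟩, rfl⟩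
    · rintro ⟨s, ⟨hs, hsS⟩, rfl⟩
      exact ⟨hsS, s, hs, rfl⟩
  have hPcard : t - m < P₀.card := by
    rw [hcardP] at hcon
    have himg : (P₀.image (fun s : ℕ => i + (s : ZMod n))).card = P₀.card := by
      apply Finset.card_image_of_injOn
      intro a ha b hb h
      rw [hP₀, Finset.coe_filter, Set.mem_setOf_eq, Finset.mem_range] at ha hb
      exact hinjf a b ha.1 hb.1 h
    omega
  have hP0sub : P₀ ⊆ Finset.range t := Finset.filter_subset _ _
  have h0P : 0 ∈ P₀ := by
    rw [hP₀, Finset.mem_filter, Finset.mem_range]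
    exact ⟨by omega, by simpa using hiS⟩
  set Q := insert t P₀ with hQdef
  have hsd : ((Finset.range t) \ Q).card < m := by
    have h1 : (Finset.range t) \ Q ⊆ (Finset.range t) \ P₀ :=
      Finset.sdiff_subset_sdiff (le_refl _) (Finset.subset_insert _ _)
    have h2 := Finset.card_le_card h1
    rw [Finset.card_sdiff_of_subset hP0sub, Finset.card_range] at h2
    have h3 : P₀.card ≤ t := by simpa using Finset.card_le_card hP0sub
    omega
  obtain ⟨x, hx⟩ := hleg.legal jw
  simp only [PN, Set.mem_diff] at hx
  obtain ⟨hx1, hx2⟩ := hx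
  refine hx2 ?_
  have hconc : ∀ u : ZMod n, u ∈ S → (∃ s : ℕ, s ≤ t ∧ u = i + (s : ZMod n)) →
      u ≠ S.get jw → x ∈ cn G u → x ∈ cnUnion G (S.take jw.val) := by
    intro u h1 h2 h3 h4
    have h5 := hbefore u h1 h2 h3
    simp only [cnUnion, Set.mem_iUnion]
    exact ⟨u, h5, h4⟩
  have hnes₀ : ∀ q : ℕ, q ≤ t → q ≠ s₀ → i + (q : ZMod n) ≠ S.get jw := by
    intro q hq hne
    rw [hw]
    rcases Nat.lt_or_ge q s₀ with h | h
    · exact hfne q s₀ h (by omega)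
    · exact (hfne s₀ q (by omega) (by omega)).symm
  have hcov : ∀ s : ℕ, s ≤ t → s ≠ s₀ → x = i + (s : ZMod n) →
      x ∈ cnUnion G (S.take jw.val) := by
    intro s hst hss hxs
    obtain ⟨q, hqQ, hq₀, hqd⟩ :=
      cover_lemma m t s₀ Q (Finset.mem_insert_of_mem h0P) (Finset.mem_insert_self _ _)
        hsd s hst hss
    have hqt : q ≤ t := by
      rcases Finset.mem_insert.mp hqQ with h | h
      · omega
      · have := Finset.mem_range.mp (hP0sub h)
        omega
    have hqS : i + (q : ZMod n) ∈ S := by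
      rcases Finset.mem_insert.mp hqQ with h | h
      · rw [h]; exact hitS
      · exact (Finset.mem_filter.mp h).2
    refine hconc _ hqS ⟨q, hqt, rfl⟩ (hnes₀ q hqt hq₀) ?_
    rw [hxs]
    exact hcn q s hqd
  simp only [cn, Set.mem_insert_iff, SimpleGraph.mem_neighborSet] at hx1
  rcases hx1 with rfl | hadj
  · have hwn : S.get jw ∉ selfFoot G S := by
      intro hsf
      have hmem2 : S.get jw ∈ selfFoot G S ∩
          ↑((Finset.range (t + 1)).image (fun s : ℕ => i + (s : ZMod n))) := by
        refine ⟨hsf, ?_⟩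
        rw [Finset.mem_coe, Finset.mem_image]
        exact ⟨s₀, Finset.mem_range.mpr (by omega), hw.symm⟩
      rw [hI] at hmem2
      rcases hmem2 with h | h
      · exact hfne 0 s₀ (by omega) (by omega) (by simpa using (h.symm.trans hw))
      · rw [Set.mem_singleton_iff] at h
        exact hfne s₀ t (by omega) (by omega) (hw.symm.trans h)
    by_contra hcc
    exact hwn ⟨jw, rfl, Set.mem_insert _ _, hcc⟩
  · rw [hG] at hadj
    obtain ⟨hne, k, hk1, hk2, hcase⟩ := cyclePow_adj.mp hadj
    rcases hcase with hxk | hxk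
    · have hx_eq : x = i + ((s₀ + k : ℕ) : ZMod n) := by
        rw [hxk, hw, add_assoc, ← Nat.cast_add]
      by_cases hle : s₀ + k ≤ t
      · exact hcov (s₀ + k) hle (by omega) hx_eq
      · refine hconc (i + (t : ZMod n)) hitS ⟨t, le_rfl, rfl⟩ (hnes₀ t le_rfl (by omega)) ?_
        rw [hx_eq]
        exact hcn t (s₀ + k) (by simp [Nat.dist]; omega)
    · by_cases hks : k ≤ s₀
      · have hx_eq : x = i + ((s₀ - k : ℕ) : ZMod n) := by
          have h1 : i + ((s₀ - k : ℕ) : ZMod n) + (k : ZMod n) = x + (k : ZMod n) := by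
            rw [add_assoc, ← Nat.cast_add, ← hxk, hw]
            congr 2
            omega
          exact (add_right_cancel h1).symm
        exact hcov (s₀ - k) (by omega) (by omega) hx_eq
      · have hr : i = x + ((k - s₀ : ℕ) : ZMod n) := by
          have h1 : i + (s₀ : ZMod n) = x + ((k - s₀ : ℕ) : ZMod n) + (s₀ : ZMod n) := by
            rw [add_assoc, ← Nat.cast_add, ← hw, hxk]
            congr 2
            omega
          exact add_right_cancel h1
        have hxnei : i ≠ x := by
          intro h
          rw [← h] at hr
          have h0 : ((k - s₀ : ℕ) : ZMod n) = 0 := (left_eq_add.mp hr)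
          have hd := (ZMod.natCast_eq_zero_iff _ n).mp h0
          have h6 := Nat.le_of_dvd (by omega) hd
          omega
        refine hconc i hiS ⟨0, by omega, by simp⟩ ?_ ?_
        · rw [hw]
          exact fun h => hfne 0 s₀ (by omega) (by omega) (by simpa using h)
        · refine Set.mem_insert_iff.mpr (Or.inr ?_)
          rw [SimpleGraph.mem_neighborSet, hG]
          exact cyclePow_adj.mpr ⟨hxnei, k - s₀, by omega, by omega, Or.inr hr⟩




lemma path_case (n m t : ℕ) (hm : 1 ≤ m) (ht1 : m + 1 ≤ t) (ht2 : t ≤ n)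
    (i : Fin n) (S : List (Fin n)) (hn : i.val + t ≤ n - 1)
    (hleg : IsLegal (pathPow n m) S)
    (hI : selfFoot (pathPow n m) S ∩ {j : Fin n | i.val ≤ j.val ∧ j.val ≤ i.val + t}
        = {j : Fin n | j = i ∨ j.val = i.val + t}) :
    (S.toFinset.filter (fun j => i.val ≤ j.val ∧ j.val < i.val + t)).card ≤ t - m := by
  have hnpos : 0 < n := i.pos
  have hitlt : i.val + t < n := by omega
  set G := pathPow n m with hG
  set it : Fin n := ⟨i.val + t, hitlt⟩ with hit
  have hitval : it.val = i.val + t := rfl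
  have hadj : ∀ u v : Fin n, u ≠ v → Nat.dist u.val v.val ≤ m → v ∈ cn G u := by
    intro u v h1 h2
    refine Set.mem_insert_iff.mpr (Or.inr ?_)
    rw [SimpleGraph.mem_neighborSet, hG]
    exact pathPow_adj.mpr ⟨h1, h2⟩
  obtain ⟨ji, hji, hjiPN⟩ : i ∈ selfFoot G S := by
    have h : i ∈ {j : Fin n | j = i ∨ j.val = i.val + t} := Or.inl rfl
    rw [← hI] at h
    exact h.1
  obtain ⟨jt, hjt, hjtPN⟩ : it ∈ selfFoot G S := by
    have h : it ∈ {j : Fin n | j = i ∨ j.val = i.val + t} := Or.inr rfl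
    rw [← hI] at h
    exact h.1
  have hgetinj : Function.Injective S.get := List.nodup_iff_injective_get.mp hleg.nodup
  have hiS : i ∈ S := List.mem_iff_get.mpr ⟨ji, hji⟩
  have hitS : it ∈ S := List.mem_iff_get.mpr ⟨jt, hjt⟩
  set J : Finset (Fin S.length) :=
    Finset.univ.filter (fun j => i.val ≤ (S.get j).val ∧ (S.get j).val ≤ i.val + t) with hJ
  have hJne : J.Nonempty := by
    refine ⟨ji, ?_⟩
    simp only [hJ, Finset.mem_filter, Finset.mem_univ, true_and, hji]
    omega
  set jw := J.max' hJne with hjw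
  have hwmem : i.val ≤ (S.get jw).val ∧ (S.get jw).val ≤ i.val + t := by
    have h : jw ∈ J := J.max'_mem hJne
    rw [hJ, Finset.mem_filter] at h
    exact h.2
  have hbefore : ∀ u : Fin n, u ∈ S → i.val ≤ u.val → u.val ≤ i.val + t →
      u ≠ S.get jw → u ∈ S.take jw.val := by
    intro u h1 h2 h3 h4
    obtain ⟨j, hj⟩ := List.mem_iff_get.mp h1
    have hjJ : j ∈ J := by
      simp only [hJ, Finset.mem_filter, Finset.mem_univ, true_and, hj]
      exact ⟨h2, h3⟩
    have hjlt : (j : ℕ) < jw.val := by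
      have h5 : j ≤ jw := J.le_max' j hjJ
      have h6 : j ≠ jw := fun h => h4 (by rw [← hj, h])
      exact lt_of_le_of_ne h5 (fun h => h6 (Fin.ext h))
    rw [← hj, List.get_eq_getElem]
    rw [List.getElem_take' j.isLt hjlt]
    exact List.getElem_mem _
  have hinjg : Set.InjOn (fun u : Fin n => u.val - i.val)
      ↑(S.toFinset.filter (fun j => i.val ≤ j.val ∧ j.val < i.val + t)) := by
    intro u hu v hv h
    simp only [Finset.coe_filter, Set.mem_setOf_eq, List.mem_toFinset] at hu hv
    simp only at h
    exact Fin.ext (by omega)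
  by_cases hc0 : S.get jw = i
  · have hjweq : jw = ji := hgetinj (hc0.trans hji.symm)
    have hgap : ∀ u : Fin n, u ∈ S → i.val < u.val → u.val ≤ i.val + m → False := by
      intro u h1 h2 h3
      have hune : u ≠ S.get jw := by
        rw [hc0]
        intro h
        rw [h] at h2
        omega
      have htake := hbefore u h1 (by omega) (by omega) hune
      have hcni : i ∈ cn G u :=
        hadj u i (fun h => by rw [h] at h2; omega) (by simp only [Nat.dist]; omega)
      refine hjiPN.2 ?_
      rw [← hjweq]
      simp only [cnUnion, Set.mem_iUnion]
      exact ⟨u, htake, hcni⟩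
    have hsub : (S.toFinset.filter (fun j => i.val ≤ j.val ∧ j.val < i.val + t)).image
        (fun u : Fin n => u.val - i.val) ⊆
        (Finset.range t).filter (fun s => s = 0 ∨ m + 1 ≤ s) := by
      intro s hs
      obtain ⟨u, hu, rfl⟩ := Finset.mem_image.mp hs
      rw [Finset.mem_filter, List.mem_toFinset] at hu
      refine Finset.mem_filter.mpr ⟨Finset.mem_range.mpr (by omega), ?_⟩
      by_contra hcc
      push_neg at hcc
      exact hgap u hu.1 (by omega) (by omega)
    rw [← Finset.card_image_of_injOn hinjg]
    exact le_trans (Finset.card_le_card hsub) (card_filter_one m t ht1)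
  by_cases hct : S.get jw = it
  · have hjweq : jw = jt := hgetinj (hct.trans hjt.symm)
    have hgap : ∀ u : Fin n, u ∈ S → i.val + t - m ≤ u.val → u.val < i.val + t → False := by
      intro u h1 h2 h3
      have hune : u ≠ S.get jw := by
        rw [hct]
        intro h
        rw [h] at h3
        omega
      have htake := hbefore u h1 (by omega) (by omega) hune
      have hcni : it ∈ cn G u :=
        hadj u it (fun h => by rw [h] at h3; omega) (by simp only [Nat.dist, hitval]; omega)
      refine hjtPN.2 ?_
      rw [← hjweq]
      simp only [cnUnion, Set.mem_iUnion]
      exact ⟨u, htake, hcni⟩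
    have hsub : (S.toFinset.filter (fun j => i.val ≤ j.val ∧ j.val < i.val + t)).image
        (fun u : Fin n => u.val - i.val) ⊆
        (Finset.range t).filter (fun s => s < t - m) := by
      intro s hs
      obtain ⟨u, hu, rfl⟩ := Finset.mem_image.mp hs
      rw [Finset.mem_filter, List.mem_toFinset] at hu
      refine Finset.mem_filter.mpr ⟨Finset.mem_range.mpr (by omega), ?_⟩
      by_contra hcc
      push_neg at hcc
      exact hgap u hu.1 (by omega) (by omega)
    rw [← Finset.card_image_of_injOn hinjg]
    exact le_trans (Finset.card_le_card hsub) (card_filter_two m t)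
  -- middle case
  have hwlo : i.val < (S.get jw).val :=
    lt_of_le_of_ne hwmem.1 (fun h => hc0 (Fin.ext h.symm))
  have hwhi : (S.get jw).val < i.val + t :=
    lt_of_le_of_ne hwmem.2 (fun h => hct (Fin.ext (hitval ▸ h)))
  by_contra hcon
  push_neg at hcon
  set A := S.toFinset.filter (fun j => i.val ≤ j.val ∧ j.val < i.val + t) with hA
  set P₀ := A.image (fun u : Fin n => u.val - i.val) with hP₀
  have hPcard : t - m < P₀.card := by
    rw [hP₀, Finset.card_image_of_injOn hinjg]
    exact hcon
  have hP0sub : P₀ ⊆ Finset.range t := by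
    intro s hs
    obtain ⟨u, hu, rfl⟩ := Finset.mem_image.mp hs
    rw [hA, Finset.mem_filter] at hu
    exact Finset.mem_range.mpr (by omega)
  have h0P : 0 ∈ P₀ := by
    refine Finset.mem_image.mpr ⟨i, ?_, by omega⟩
    rw [hA, Finset.mem_filter, List.mem_toFinset]
    exact ⟨hiS, le_rfl, by omega⟩
  set Q := insert t P₀ with hQ
  have hsd : ((Finset.range t) \ Q).card < m := by
    have h1 : (Finset.range t) \ Q ⊆ (Finset.range t) \ P₀ :=
      Finset.sdiff_subset_sdiff (le_refl _) (Finset.subset_insert _ _)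
    have h2 := Finset.card_le_card h1
    rw [Finset.card_sdiff_of_subset hP0sub, Finset.card_range] at h2
    have h3 : P₀.card ≤ t := by simpa using Finset.card_le_card hP0sub
    omega
  have hwit : ∀ q : ℕ, q ∈ Q → ∃ u : Fin n, u ∈ S ∧ u.val = i.val + q := by
    intro q hq
    rcases Finset.mem_insert.mp hq with h | h
    · exact ⟨it, hitS, by omega⟩
    · obtain ⟨u, hu, hgu⟩ := Finset.mem_image.mp h
      rw [hA, Finset.mem_filter, List.mem_toFinset] at hu
      exact ⟨u, hu.1, by omega⟩
  obtain ⟨x, hx⟩ := hleg.legal jw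
  simp only [PN, Set.mem_diff] at hx
  obtain ⟨hx1, hx2⟩ := hx
  refine hx2 ?_
  have hconc : ∀ u : Fin n, u ∈ S → i.val ≤ u.val → u.val ≤ i.val + t →
      u ≠ S.get jw → x ∈ cn G u → x ∈ cnUnion G (S.take jw.val) := by
    intro u h1 h2 h3 h4 h5
    have h6 := hbefore u h1 h2 h3 h4
    simp only [cnUnion, Set.mem_iUnion]
    exact ⟨u, h6, h5⟩
  simp only [cn, Set.mem_insert_iff, SimpleGraph.mem_neighborSet] at hx1
  rcases hx1 with rfl | hadjx
  · have hwn : S.get jw ∉ selfFoot G S := by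
      intro hsf
      have hmem2 : S.get jw ∈ selfFoot G S ∩
          {j : Fin n | i.val ≤ j.val ∧ j.val ≤ i.val + t} := ⟨hsf, hwmem.1, hwmem.2⟩
      rw [hI] at hmem2
      simp only [Set.mem_setOf_eq] at hmem2
      rcases hmem2 with h | h
      · exact hc0 h
      · omega
    by_contra hcc
    exact hwn ⟨jw, rfl, Set.mem_insert _ _, hcc⟩
  · rw [hG] at hadjx
    obtain ⟨hnexw, hdist⟩ := pathPow_adj.mp hadjx
    by_cases hxlo : x.val < i.val
    · refine hconc i hiS le_rfl (by omega) (fun h => hc0 h.symm) ?_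
      refine hadj i x (fun h => by rw [← h] at hxlo; omega) ?_
      simp only [Nat.dist] at hdist ⊢
      omega
    by_cases hxhi : i.val + t < x.val
    · refine hconc it hitS (by omega) (by omega) (fun h => hct h.symm) ?_
      refine hadj it x (fun h => by rw [← h] at hxhi; omega) ?_
      simp only [Nat.dist, hitval] at hdist ⊢
      omega
    · have hs_le : x.val - i.val ≤ t := by omega
      have hss₀ : x.val - i.val ≠ (S.get jw).val - i.val := by
        intro h
        exact hnexw (Fin.ext (show (S.get jw).val = x.val by omega))
      obtain ⟨q, hqQ, hq₀, hqd⟩ :=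
        cover_lemma m t ((S.get jw).val - i.val) Q (Finset.mem_insert_of_mem h0P)
          (Finset.mem_insert_self _ _) hsd (x.val - i.val) hs_le hss₀
      obtain ⟨u, huS, huval⟩ := hwit q hqQ
      have hqt : q ≤ t := by
        rcases Finset.mem_insert.mp hqQ with h | h
        · omega
        · have := Finset.mem_range.mp (hP0sub h)
          omega
      refine hconc u huS (by omega) (by omega)
        (fun h => hq₀ (by rw [h] at huval; omega)) ?_
      rcases eq_or_ne u x with rfl | hux
      · exact Set.mem_insert _ _
      · refine hadj u x hux ?_
        simp only [Nat.dist] at hqd ⊢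
        omega

end GrundyDom

open GrundyDom Finset

/-- Lemma on powers of cycles and paths: if `S` is a legal dominating
sequence of `C_n^m` (resp. `P_n^m`) whose self-footprinting set intersects the interval
`[i, i+t]` exactly in `{i, i+t}` (with `m+1 ≤ t ≤ n`), then `|Ŝ ∩ [i, i+t)| ≤ t - m`.
For the path power, vertices are `0`-based: vertex `j : Fin n` represents `j+1 ∈ [n]`. -/
theorem stmt5 (n m t : ℕ) (hm : 1 ≤ m) (ht1 : m + 1 ≤ t) (ht2 : t ≤ n) :
    (∀ (i : ZMod n) (S : List (ZMod n)), IsLegal (cyclePow n m) S →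
      selfFoot (cyclePow n m) S ∩
          ↑((Finset.range (t + 1)).image (fun s : ℕ => i + (s : ZMod n)))
        = {i, i + (t : ZMod n)} →
      (S.toFinset ∩ (Finset.range t).image (fun s : ℕ => i + (s : ZMod n))).card ≤ t - m)
    ∧
    (∀ (i : Fin n) (S : List (Fin n)), i.val + t ≤ n - 1 →
      IsLegal (pathPow n m) S →
      selfFoot (pathPow n m) S ∩ {j : Fin n | i.val ≤ j.val ∧ j.val ≤ i.val + t}
        = {j : Fin n | j = i ∨ j.val = i.val + t} →
      (S.toFinset.filter (fun j => i.val ≤ j.val ∧ j.val < i.val + t)).card ≤ t - m) := by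
  refine ⟨fun i S hleg hI => cycle_case n m t hm ht1 ht2 i S hleg hI,
    fun i S hn hleg hI => path_case n m t hm ht1 ht2 i S hn hleg hI⟩
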